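/- Let q and q′ be nonzero complex numbers. If the quantum planes A_q and A_{q′} are isomorphic as ℂ-algebras, then q′ = q or q′ = q^{-1}. Conversely, if q′ = q or q′ = q^{-1}, then A_q and A_{q′} are isomorphic as ℂ-algebras. -/

import Mathlib

open FreeAlgebra

/-- The free associative ℂ-algebra on two generators. -/
abbrev FreeTwo : Type := FreeAlgebra ℂ (Fin 2)

/-- The defining relation of the quantum plane with parameter `q`:
`x * y = q • (y * x)`. -/
def quantumRel (q : ℂ) : FreeTwo → FreeTwo → Prop :=
  fun a b => a = ι ℂ 0 * ι ℂ 1 ∧ b = q • (ι ℂ 1 * ι ℂ 0)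

/-- The quantum plane `ℂ⟨x,y⟩/(xy - q·yx)`. -/
abbrev QuantumPlane (q : ℂ) : Type := RingQuot (quantumRel q)


open TrivSqZeroExt

noncomputable section QPAux

/-- canonical quotient map -/
def qpMk (q : ℂ) : FreeTwo →ₐ[ℂ] QuantumPlane q := RingQuot.mkAlgHom ℂ (quantumRel q)

def qpX (q : ℂ) : QuantumPlane q := qpMk q (ι ℂ 0)
def qpY (q : ℂ) : QuantumPlane q := qpMk q (ι ℂ 1)

theorem qpRel (q : ℂ) : qpX q * qpY q = q • (qpY q * qpX q) := by
  have h := RingQuot.mkAlgHom_rel ℂ (s := quantumRel q)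
      (x := ι ℂ 0 * ι ℂ 1) (y := q • (ι ℂ 1 * ι ℂ 0)) ⟨rfl, rfl⟩
  simpa [qpX, qpY, qpMk, map_mul, map_smul] using h

/-- lift an algebra hom out of the quantum plane -/
def qpLift {q : ℂ} {B : Type*} [Semiring B] [Algebra ℂ B] (u v : B)
    (h : u * v = q • (v * u)) : QuantumPlane q →ₐ[ℂ] B :=
  RingQuot.liftAlgHom ℂ ⟨FreeAlgebra.lift ℂ ![u, v], by
    rintro a b ⟨rfl, rfl⟩
    simp [map_mul, map_smul, h]⟩

@[simp] theorem qpLift_X {q : ℂ} {B : Type*} [Semiring B] [Algebra ℂ B] (u v : B)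
    (h : u * v = q • (v * u)) : qpLift u v h (qpX q) = u := by
  simp [qpLift, qpX, qpMk, RingQuot.liftAlgHom_mkAlgHom_apply]

@[simp] theorem qpLift_Y {q : ℂ} {B : Type*} [Semiring B] [Algebra ℂ B] (u v : B)
    (h : u * v = q • (v * u)) : qpLift u v h (qpY q) = v := by
  simp [qpLift, qpY, qpMk, RingQuot.liftAlgHom_mkAlgHom_apply]

theorem qpAdjoin (q : ℂ) : Algebra.adjoin ℂ {qpX q, qpY q} = ⊤ := by
  have h1 : Algebra.adjoin ℂ (Set.range (ι ℂ : Fin 2 → FreeTwo)) = ⊤ :=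
    FreeAlgebra.adjoin_range_ι ℂ (Fin 2)
  have h2 : (Algebra.adjoin ℂ (Set.range (ι ℂ : Fin 2 → FreeTwo))).map (qpMk q) = ⊤ := by
    rw [h1, Algebra.map_top]
    rw [AlgHom.range_eq_top]
    exact RingQuot.mkAlgHom_surjective ℂ _
  rw [AlgHom.map_adjoin] at h2
  rw [← h2]
  congr 1
  rw [← Set.range_comp]
  ext z
  constructor
  · rintro (rfl | rfl) <;> [exact ⟨0, rfl⟩; exact ⟨1, rfl⟩]
  · rintro ⟨i, rfl⟩
    fin_cases i
    · exact Or.inl rfl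
    · exact Or.inr rfl

theorem qpHomExt {q : ℂ} {B : Type*} [Semiring B] [Algebra ℂ B]
    (f g : QuantumPlane q →ₐ[ℂ] B) (hx : f (qpX q) = g (qpX q))
    (hy : f (qpY q) = g (qpY q)) : f = g := by
  have : f.comp (qpMk q) = g.comp (qpMk q) := by
    apply FreeAlgebra.hom_ext
    funext i
    fin_cases i
    · exact hx
    · exact hy
  apply DFunLike.ext
  intro w
  obtain ⟨z, rfl⟩ := RingQuot.mkAlgHom_surjective ℂ (quantumRel q) w
  exact DFunLike.congr_fun this z

-- polynomial representation
abbrev QPoly := MvPolynomial (Fin 2) ℂ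

/-- substitution X1 ↦ r • X1 -/
def qpSub (r : ℂ) : QPoly →ₐ[ℂ] QPoly :=
  MvPolynomial.aeval ![MvPolynomial.X 0, r • MvPolynomial.X 1]

def qpXhat (r : ℂ) : Module.End ℂ QPoly :=
  (LinearMap.mulLeft ℂ (MvPolynomial.X 0)).comp (qpSub r).toLinearMap

def qpYhat : Module.End ℂ QPoly := LinearMap.mulLeft ℂ (MvPolynomial.X 1)

theorem qpHatRel (r : ℂ) : qpXhat r * qpYhat = r • (qpYhat * qpXhat r) := by
  apply LinearMap.ext
  intro p
  show qpXhat r (qpYhat p) = r • (qpYhat (qpXhat r p))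
  simp only [qpXhat, qpYhat, LinearMap.comp_apply, LinearMap.mulLeft_apply,
    AlgHom.toLinearMap_apply, map_mul]
  have : qpSub r (MvPolynomial.X 1) = r • MvPolynomial.X 1 := by
    simp [qpSub]
  rw [this, MvPolynomial.smul_eq_C_mul, MvPolynomial.smul_eq_C_mul]
  ring

def qpPhi (r : ℂ) : QuantumPlane r →ₐ[ℂ] Module.End ℂ QPoly :=
  qpLift (qpXhat r) qpYhat (qpHatRel r)

/-- the normal-form linear map -/
def qpE (r : ℂ) : QuantumPlane r →ₗ[ℂ] QPoly :=
  (LinearMap.applyₗ (1 : QPoly)).comp (qpPhi r).toLinearMap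

@[simp] theorem qpE_one (r : ℂ) : qpE r 1 = 1 := by
  simp [qpE, LinearMap.applyₗ_apply_apply]

@[simp] theorem qpE_X (r : ℂ) : qpE r (qpX r) = MvPolynomial.X 0 := by
  simp [qpE, qpPhi, LinearMap.applyₗ_apply_apply, qpXhat, qpSub]

@[simp] theorem qpE_Y (r : ℂ) : qpE r (qpY r) = MvPolynomial.X 1 := by
  simp [qpE, qpPhi, LinearMap.applyₗ_apply_apply, qpYhat]

@[simp] theorem qpE_YX (r : ℂ) : qpE r (qpY r * qpX r) = MvPolynomial.X 1 * MvPolynomial.X 0 := by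
  simp [qpE, qpPhi, LinearMap.applyₗ_apply_apply, qpXhat, qpYhat, qpSub, map_mul]

@[simp] theorem qpE_XX (r : ℂ) : qpE r (qpX r * qpX r) = MvPolynomial.X 0 * MvPolynomial.X 0 := by
  simp [qpE, qpPhi, LinearMap.applyₗ_apply_apply, qpXhat, qpSub, map_mul]

@[simp] theorem qpE_YY (r : ℂ) : qpE r (qpY r * qpY r) = MvPolynomial.X 1 * MvPolynomial.X 1 := by
  simp [qpE, qpPhi, LinearMap.applyₗ_apply_apply, qpYhat, map_mul]

abbrev QT := TrivSqZeroExt ℂ (ℂ × ℂ)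

theorem qtRel (r : ℂ) : (inr ((1:ℂ),(0:ℂ)) : QT) * inr (0,1)
    = r • (inr (0,1) * inr (1,0)) := by
  simp [inr_mul_inr]

def qpPi (r : ℂ) : QuantumPlane r →ₐ[ℂ] QT :=
  qpLift (inr (1,0)) (inr (0,1)) (qtRel r)

@[simp] theorem qpPi_X (r : ℂ) : qpPi r (qpX r) = inr (1,0) := qpLift_X _ _ _
@[simp] theorem qpPi_Y (r : ℂ) : qpPi r (qpY r) = inr (0,1) := qpLift_Y _ _ _

-- grading map
theorem qpDRel (r : ℂ) : (Polynomial.C (qpX r) * Polynomial.X) * (Polynomial.C (qpY r) * Polynomial.X)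
    = r • ((Polynomial.C (qpY r) * Polynomial.X) * (Polynomial.C (qpX r) * Polynomial.X)) := by
  have key : ∀ a b : QuantumPlane r, (Polynomial.C a * Polynomial.X) * (Polynomial.C b * Polynomial.X)
      = Polynomial.C (a * b) * (Polynomial.X * Polynomial.X) := by
    intro a b
    rw [mul_assoc, ← mul_assoc Polynomial.X (Polynomial.C b) Polynomial.X, Polynomial.X_mul_C,
      mul_assoc (Polynomial.C b), ← mul_assoc (Polynomial.C a), ← map_mul]
  rw [key, key, qpRel r, ← Polynomial.smul_C, smul_mul_assoc]

def qpD (r : ℂ) : QuantumPlane r →ₐ[ℂ] Polynomial (QuantumPlane r) :=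
  qpLift (Polynomial.C (qpX r) * Polynomial.X) (Polynomial.C (qpY r) * Polynomial.X) (qpDRel r)

/-- k-th homogeneous component -/
def qpC (r : ℂ) (k : ℕ) (w : QuantumPlane r) : QuantumPlane r := (qpD r w).coeff k

theorem qpC_add (r : ℂ) (k : ℕ) (w w' : QuantumPlane r) :
    qpC r k (w + w') = qpC r k w + qpC r k w' := by simp [qpC, map_add]

theorem qpC_algebraMap (r : ℂ) (k : ℕ) (s : ℂ) :
    qpC r k (algebraMap ℂ _ s) = if k = 0 then algebraMap ℂ _ s else 0 := by
  rw [qpC, AlgHom.commutes, Polynomial.algebraMap_apply, Polynomial.coeff_C]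

theorem qpC0_mul (r : ℂ) (w w' : QuantumPlane r) :
    qpC r 0 (w * w') = qpC r 0 w * qpC r 0 w' := by
  simp [qpC, map_mul, Polynomial.mul_coeff_zero]

theorem qpC1_mul (r : ℂ) (w w' : QuantumPlane r) :
    qpC r 1 (w * w') = qpC r 0 w * qpC r 1 w' + qpC r 1 w * qpC r 0 w' := by
  simp only [qpC, map_mul, Polynomial.coeff_mul]
  have h : Finset.HasAntidiagonal.antidiagonal 1 = ({(0,1),(1,0)} : Finset (ℕ × ℕ)) := by decide
  rw [h, Finset.sum_insert (by decide), Finset.sum_singleton]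

theorem qpC2_mul (r : ℂ) (w w' : QuantumPlane r) :
    qpC r 2 (w * w') = qpC r 0 w * qpC r 2 w' + qpC r 1 w * qpC r 1 w'
      + qpC r 2 w * qpC r 0 w' := by
  simp only [qpC, map_mul, Polynomial.coeff_mul]
  have h : Finset.HasAntidiagonal.antidiagonal 2 = ({(0,2),(1,1),(2,0)} : Finset (ℕ × ℕ)) := by decide
  rw [h, Finset.sum_insert (by decide), Finset.sum_insert (by decide), Finset.sum_singleton,
    add_assoc]

theorem qpC_X (r : ℂ) (k : ℕ) : qpC r k (qpX r) = if k = 1 then qpX r else 0 := by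
  have h : qpD r (qpX r) = Polynomial.C (qpX r) * Polynomial.X := qpLift_X _ _ _
  rw [qpC, h]
  simp [Polynomial.coeff_C_mul, Polynomial.coeff_X, eq_comm]

theorem qpC_Y (r : ℂ) (k : ℕ) : qpC r k (qpY r) = if k = 1 then qpY r else 0 := by
  have h : qpD r (qpY r) = Polynomial.C (qpY r) * Polynomial.X := qpLift_Y _ _ _
  rw [qpC, h]
  simp [Polynomial.coeff_C_mul, Polynomial.coeff_X, eq_comm]

theorem qpC_smul (r : ℂ) (k : ℕ) (c : ℂ) (w : QuantumPlane r) :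
    qpC r k (c • w) = c • qpC r k w := by
  simp [qpC, map_smul]

theorem qt_mul (s s' : ℂ) (v v' : ℂ × ℂ) :
    ((inl s + inr v) : QT) * (inl s' + inr v') = inl (s*s') + inr (s • v' + s' • v) := by
  rw [mul_add, add_mul, add_mul, inl_mul_inl, inl_mul_inr, inr_mul_inl, inr_mul_inr,
    op_smul_eq_smul, inr_add]
  abel
theorem qt_smul (c : ℂ) (s : ℂ) (v : ℂ × ℂ) :
    c • ((inl s + inr v) : QT) = inl (c * s) + inr (c • v) := by
  rw [smul_add]
  congr 1
  · rw [show (c*s : ℂ) = c • s from rfl, inl_smul]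
  · rw [inr_smul]
theorem qt_eq (s s' : ℂ) (v v' : ℂ × ℂ) (h : ((inl s + inr v) : QT) = inl s' + inr v') :
    s = s' ∧ v = v' := by
  constructor
  · simpa using congrArg fst h
  · simpa using congrArg snd h

-- ### new material
theorem qt_top (B : Subalgebra ℂ QT) (h1 : inr (1,0) ∈ B) (h2 : inr (0,1) ∈ B) (z : QT) :
    z ∈ B := by
  rw [← inl_fst_add_inr_snd_eq z]
  apply B.add_mem
  · have : (inl z.fst : QT) = algebraMap ℂ QT z.fst := rfl
    rw [this]; exact B.algebraMap_mem _
  · have : (inr z.snd : QT) = z.snd.1 • inr (1,0) + z.snd.2 • inr (0,1) := by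
      rw [← inr_smul, ← inr_smul, ← inr_add]
      congr 1
      ext <;> simp
    rw [this]
    exact B.add_mem (B.smul_mem h1 _) (B.smul_mem h2 _)

theorem span_aux (u : ℂ × ℂ)
    (h1 : ((1:ℂ),(0:ℂ)) ∈ Submodule.span ℂ ({u, 0} : Set (ℂ × ℂ)))
    (h2 : ((0:ℂ),(1:ℂ)) ∈ Submodule.span ℂ ({u, 0} : Set (ℂ × ℂ))) : False := by
  rw [Submodule.mem_span_pair] at h1 h2
  obtain ⟨s, t, hs⟩ := h1
  obtain ⟨s', t', hs'⟩ := h2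
  simp only [smul_zero, add_zero, Prod.ext_iff, Prod.smul_fst, Prod.smul_snd, smul_eq_mul] at hs hs'
  obtain ⟨e1, e2⟩ := hs
  obtain ⟨e3, e4⟩ := hs'
  have hs0 : s ≠ 0 := by rintro rfl; simp at e1
  have hu2 : u.2 = 0 := by
    rcases mul_eq_zero.mp e2 with h | h
    · exact absurd h hs0
    · exact h
  rw [hu2, mul_zero] at e4
  exact one_ne_zero e4.symm

def qpS (r : ℂ) : Subalgebra ℂ (QuantumPlane r) where
  carrier := {w | ∃ s a b : ℂ, qpPi r w = inl s + inr (a, b) ∧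
      qpC r 0 w = algebraMap ℂ _ s ∧ qpC r 1 w = a • qpX r + b • qpY r}
  algebraMap_mem' := by
    intro s
    refine ⟨s, 0, 0, ?_, ?_, ?_⟩
    · rw [AlgHom.commutes]
      have : ((0,0) : ℂ × ℂ) = 0 := rfl
      rw [this, inr_zero, add_zero]
      rfl
    · rw [qpC_algebraMap]; simp
    · rw [qpC_algebraMap]; simp
  one_mem' := by
    refine ⟨1, 0, 0, ?_, ?_, ?_⟩
    · rw [map_one]
      have : ((0,0) : ℂ × ℂ) = 0 := rfl
      rw [this, inr_zero, add_zero, inl_one]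
    · have h := qpC_algebraMap r 0 1
      simpa using h
    · have h := qpC_algebraMap r 1 1
      simpa using h
  zero_mem' := by
    refine ⟨0, 0, 0, ?_, ?_, ?_⟩
    · rw [map_zero]
      have : ((0,0) : ℂ × ℂ) = 0 := rfl
      rw [this, inr_zero, add_zero, inl_zero]
    · have h := qpC_algebraMap r 0 0
      simpa using h
    · have h := qpC_algebraMap r 1 0
      simpa using h
  add_mem' := by
    rintro w w' ⟨s, a, b, hπ, h0, h1⟩ ⟨s', a', b', hπ', h0', h1'⟩
    refine ⟨s + s', a + a', b + b', ?_, ?_, ?_⟩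
    · rw [map_add, hπ, hπ', inl_add]
      have : ((a+a', b+b') : ℂ × ℂ) = (a,b) + (a',b') := rfl
      rw [this, inr_add]
      abel
    · rw [qpC_add, h0, h0', map_add]
    · rw [qpC_add, h1, h1']
      module
  mul_mem' := by
    rintro w w' ⟨s, a, b, hπ, h0, h1⟩ ⟨s', a', b', hπ', h0', h1'⟩
    refine ⟨s * s', s*a' + s'*a, s*b' + s'*b, ?_, ?_, ?_⟩
    · rw [map_mul, hπ, hπ', qt_mul]
      have hv : (s • (a',b') + s' • (a,b) : ℂ × ℂ) = (s*a'+s'*a, s*b'+s'*b) := by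
        simp only [Prod.smul_mk, Prod.mk_add_mk, smul_eq_mul, Prod.mk.injEq]
      rw [hv]
    · rw [qpC0_mul, h0, h0', map_mul]
    · rw [qpC1_mul, h0, h0', h1, h1']
      have e1 : ∀ (c : ℂ) (z : QuantumPlane r), algebraMap ℂ _ c * z = c • z :=
        fun c z => (Algebra.smul_def c z).symm
      have e2 : ∀ (c : ℂ) (z : QuantumPlane r), z * algebraMap ℂ _ c = c • z :=
        fun c z => by rw [← Algebra.commutes]; exact (Algebra.smul_def c z).symm
      rw [e1, e2]
      module

theorem qpS_top (r : ℂ) : ∀ w, w ∈ qpS r := by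
  have h : qpS r = ⊤ := by
    rw [eq_top_iff, ← qpAdjoin r]
    apply Algebra.adjoin_le
    rintro z hz
    rcases hz with rfl | hz
    · refine ⟨0, 1, 0, ?_, ?_, ?_⟩
      · rw [qpPi_X, inl_zero, zero_add]
      · rw [qpC_X]; simp
      · rw [qpC_X]; simp
    · rcases hz with rfl
      refine ⟨0, 0, 1, ?_, ?_, ?_⟩
      · rw [qpPi_Y, inl_zero, zero_add]
      · rw [qpC_Y]; simp
      · rw [qpC_Y]; simp
  intro w; rw [h]; trivial

theorem qpS_mem (r : ℂ) (w : QuantumPlane r) : ∃ s a b : ℂ, qpPi r w = inl s + inr (a, b) ∧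
    qpC r 0 w = algebraMap ℂ _ s ∧ qpC r 1 w = a • qpX r + b • qpY r :=
  qpS_top r w

def qtSpan (V : Submodule ℂ (ℂ × ℂ)) : Subalgebra ℂ QT where
  carrier := {z | z.snd ∈ V}
  algebraMap_mem' := by intro s; simp [TrivSqZeroExt.algebraMap_eq_inl]
  one_mem' := by simp
  zero_mem' := by simp
  add_mem' := by intro z z' hz hz'; simp only [Set.mem_setOf_eq, TrivSqZeroExt.snd_add]
                 exact V.add_mem hz hz'
  mul_mem' := by
    intro z z' hz hz'
    simp only [Set.mem_setOf_eq, TrivSqZeroExt.snd_mul, op_smul_eq_smul]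
    exact V.add_mem (V.smul_mem _ hz') (V.smul_mem _ hz)

theorem qp_forward (q r : ℂ) (hq : q ≠ 0) (φ : QuantumPlane q ≃ₐ[ℂ] QuantumPlane r) :
    r = q ∨ q * r = 1 := by
  set X : QuantumPlane r := φ (qpX q) with hXdef
  set Y : QuantumPlane r := φ (qpY q) with hYdef
  have hrel : X * Y = q • (Y * X) := by
    have h := congrArg φ (qpRel q)
    simpa [map_mul, map_smul] using h
  have hadj : Algebra.adjoin ℂ ({X, Y} : Set (QuantumPlane r)) = ⊤ := by
    have h1 := congrArg (Subalgebra.map (φ : QuantumPlane q →ₐ[ℂ] QuantumPlane r)) (qpAdjoin q)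
    rw [AlgHom.map_adjoin, Set.image_pair, Algebra.map_top] at h1
    have h2 : (φ : QuantumPlane q →ₐ[ℂ] QuantumPlane r).range = ⊤ :=
      (AlgHom.range_eq_top _).mpr φ.surjective
    rw [h2] at h1
    have hXc : (φ : QuantumPlane q →ₐ[ℂ] QuantumPlane r) (qpX q) = X := rfl
    have hYc : (φ : QuantumPlane q →ₐ[ℂ] QuantumPlane r) (qpY q) = Y := rfl
    rw [hXc, hYc] at h1
    exact h1
  -- case q = 1
  by_cases hq1 : q = 1
  · subst hq1
    left
    have hcomm : X * Y = Y * X := by simpa using hrel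
    have hC1 : ∀ w : QuantumPlane r, X * w = w * X ∧ Y * w = w * Y := by
      intro w
      have hw : w ∈ Subalgebra.centralizer ℂ ({X, Y} : Set (QuantumPlane r)) := by
        have : Algebra.adjoin ℂ ({X, Y} : Set (QuantumPlane r)) ≤
            Subalgebra.centralizer ℂ ({X, Y} : Set (QuantumPlane r)) := by
          apply Algebra.adjoin_le
          rintro z (rfl | rfl) <;> rw [SetLike.mem_coe, Subalgebra.mem_centralizer_iff] <;>
            rintro g (rfl | rfl) <;> first | rfl | exact hcomm | exact hcomm.symm
        exact this (hadj ▸ Algebra.mem_top)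
      rw [Subalgebra.mem_centralizer_iff] at hw
      exact ⟨hw X (by left; rfl), hw Y (by right; rfl)⟩
    have hC2 : qpX r * qpY r = qpY r * qpX r := by
      have h1 : ∀ w : QuantumPlane r, w ∈ Algebra.adjoin ℂ ({X, Y} : Set (QuantumPlane r)) →
          qpX r * w = w * qpX r := by
        intro w hw
        have : Algebra.adjoin ℂ ({X, Y} : Set (QuantumPlane r)) ≤
            Subalgebra.centralizer ℂ ({qpX r} : Set (QuantumPlane r)) := by
          apply Algebra.adjoin_le
          rintro z (rfl | rfl) <;> rw [SetLike.mem_coe, Subalgebra.mem_centralizer_iff] <;>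
            rintro g rfl
          · exact ((hC1 (qpX r)).1).symm
          · exact ((hC1 (qpX r)).2).symm
        have hmem := this hw
        rw [Subalgebra.mem_centralizer_iff] at hmem
        exact hmem (qpX r) rfl
      exact h1 (qpY r) (hadj ▸ Algebra.mem_top)
    have h2 : qpY r * qpX r = r • (qpY r * qpX r) := by
      conv_lhs => rw [← hC2, qpRel r]
    have h3 := congrArg (qpE r) h2
    rw [map_smul, qpE_YX] at h3
    have h4 := congrArg (MvPolynomial.aeval (fun _ : Fin 2 => (1:ℂ))) h3
    simp at h4
    exact h4.symm
  -- main case q ≠ 1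
  have hq1' : (1:ℂ) - q ≠ 0 := sub_ne_zero.mpr (Ne.symm hq1)
  obtain ⟨α, a, b, hπX, h0X, h1X⟩ := qpS_mem r X
  obtain ⟨β, c, d, hπY, h0Y, h1Y⟩ := qpS_mem r Y
  -- image of the relation in QT
  have hπrel := congrArg (qpPi r) hrel
  rw [map_mul, map_smul, map_mul, hπX, hπY, qt_mul, qt_mul, qt_smul] at hπrel
  obtain ⟨hfst, hsnd⟩ := qt_eq _ _ _ _ hπrel
  have hαβ : α * β = 0 := by
    have h : (1 - q) * (α * β) = 0 := by linear_combination hfst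
    rcases mul_eq_zero.mp h with h | h
    · exact absurd h hq1'
    · exact h
  have hsnd1 := congrArg Prod.fst hsnd
  have hsnd2 := congrArg Prod.snd hsnd
  simp only [Prod.smul_fst, Prod.smul_snd, Prod.fst_add, Prod.snd_add, smul_eq_mul] at hsnd1 hsnd2
  have hac : α * c + β * a = 0 := by
    have h : (1 - q) * (α * c + β * a) = 0 := by linear_combination hsnd1
    rcases mul_eq_zero.mp h with h | h
    · exact absurd h hq1'
    · exact h
  have hbd : α * d + β * b = 0 := by
    have h : (1 - q) * (α * d + β * b) = 0 := by linear_combination hsnd2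
    rcases mul_eq_zero.mp h with h | h
    · exact absurd h hq1'
    · exact h
  -- spanning
  set V : Submodule ℂ (ℂ × ℂ) := Submodule.span ℂ ({(a,b), (c,d)} : Set (ℂ × ℂ)) with hVdef
  have hVmem : ∀ z : QT, z.snd ∈ V := by
    have htop : Algebra.adjoin ℂ ({qpPi r X, qpPi r Y} : Set QT) = ⊤ := by
      have h1 := congrArg (Subalgebra.map (qpPi r)) hadj
      rw [AlgHom.map_adjoin, Set.image_pair, Algebra.map_top] at h1
      have hr : (qpPi r).range = ⊤ := by
        rw [eq_top_iff]
        intro z _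
        exact qt_top _ ((AlgHom.mem_range _).mpr ⟨qpX r, qpPi_X r⟩)
          ((AlgHom.mem_range _).mpr ⟨qpY r, qpPi_Y r⟩) z
      rw [hr] at h1
      exact h1
    intro z
    have hz : z ∈ Algebra.adjoin ℂ ({qpPi r X, qpPi r Y} : Set QT) := htop ▸ Algebra.mem_top
    have hle : Algebra.adjoin ℂ ({qpPi r X, qpPi r Y} : Set QT) ≤ qtSpan V := by
      apply Algebra.adjoin_le
      rintro z (rfl | rfl)
      · show (qpPi r X).snd ∈ V
        rw [hπX]
        simp only [TrivSqZeroExt.snd_add, TrivSqZeroExt.snd_inl, TrivSqZeroExt.snd_inr, zero_add]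
        exact Submodule.subset_span (by left; rfl)
      · show (qpPi r Y).snd ∈ V
        rw [hπY]
        simp only [TrivSqZeroExt.snd_add, TrivSqZeroExt.snd_inl, TrivSqZeroExt.snd_inr, zero_add]
        exact Submodule.subset_span (by right; rfl)
    exact hle hz
  have h10 : ((1:ℂ),(0:ℂ)) ∈ V := by
    have := hVmem (inr (1,0)); simpa using this
  have h01 : ((0:ℂ),(1:ℂ)) ∈ V := by
    have := hVmem (inr (0,1)); simpa using this
  have hcd0 : ¬ (c = 0 ∧ d = 0) := by
    rintro ⟨rfl, rfl⟩
    exact span_aux (a, b) h10 h01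
  have hab0 : ¬ (a = 0 ∧ b = 0) := by
    rintro ⟨rfl, rfl⟩
    rw [hVdef, Set.pair_comm] at h10 h01
    exact span_aux (c, d) h10 h01
  have hα : α = 0 := by
    by_contra hα0
    have hβ : β = 0 := by
      rcases mul_eq_zero.mp hαβ with h | h
      · exact absurd h hα0
      · exact h
    apply hcd0
    constructor
    · have := hac; rw [hβ] at this; simp at this
      rcases this with h | h
      · exact absurd h hα0
      · exact h
    · have := hbd; rw [hβ] at this; simp at this
      rcases this with h | h
      · exact absurd h hα0
      · exact h
  have hβ : β = 0 := by
    by_contra hβ0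
    apply hab0
    constructor
    · have := hac; rw [hα] at this; simp at this
      rcases this with h | h
      · exact absurd h hβ0
      · exact h
    · have := hbd; rw [hα] at this; simp at this
      rcases this with h | h
      · exact absurd h hβ0
      · exact h
  -- degree 2 component
  rw [hα, map_zero] at h0X
  rw [hβ, map_zero] at h0Y
  have hsm : ∀ (u v : QuantumPlane r) (s t : ℂ), (s • u) * (t • v) = (s * t) • (u * v) := by
    intro u v s t
    rw [smul_mul_assoc, mul_smul_comm, smul_smul]
  have expand : ∀ a' b' c' d' : ℂ, (a' • qpX r + b' • qpY r) * (c' • qpX r + d' • qpY r)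
      = (a'*c') • (qpX r * qpX r) + (a'*d'*r + b'*c') • (qpY r * qpX r)
        + (b'*d') • (qpY r * qpY r) := by
    intro a' b' c' d'
    rw [add_mul, mul_add, mul_add, hsm, hsm, hsm, hsm, qpRel r, smul_smul]
    module
  have hc2 := congrArg (qpC r 2) hrel
  rw [qpC_smul, qpC2_mul, qpC2_mul, h0X, h0Y, h1X, h1Y, zero_mul, mul_zero, zero_add, add_zero,
    zero_mul, mul_zero, zero_add, add_zero, expand, expand] at hc2
  have hE := congrArg (qpE r) hc2
  rw [map_smul] at hE
  simp only [map_add, map_smul, qpE_XX, qpE_YX, qpE_YY] at hE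
  have ev : ∀ f : Fin 2 → ℂ, (MvPolynomial.aeval f (MvPolynomial.X 0 * MvPolynomial.X 0 : QPoly),
      MvPolynomial.aeval f (MvPolynomial.X 1 * MvPolynomial.X 0 : QPoly)) = (f 0 * f 0, f 1 * f 0) := by
    intro f; simp
  have e1 := congrArg (MvPolynomial.aeval (![1,0] : Fin 2 → ℂ)) hE
  have e2 := congrArg (MvPolynomial.aeval (![0,1] : Fin 2 → ℂ)) hE
  have e3 := congrArg (MvPolynomial.aeval (![1,1] : Fin 2 → ℂ)) hE
  simp [map_add, map_smul, map_mul, smul_eq_mul] at e1 e2 e3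
  -- e1 : a*c = q*(c*a), e2 : b*d = q*(d*b), e3 : sums
  have hac2 : a * c = 0 := by
    have h : (1 - q) * (a * c) = 0 := by linear_combination e1
    rcases mul_eq_zero.mp h with h | h
    · exact absurd h hq1'
    · exact h
  have hbd2 : b * d = 0 := by
    have h : (1 - q) * (b * d) = 0 := by linear_combination e2
    rcases mul_eq_zero.mp h with h | h
    · exact absurd h hq1'
    · exact h
  have hmid : a*d*r + b*c = q*(c*b*r + d*a) := by linear_combination e3 - e1 - e2
  by_cases ha : a = 0
  · have hb : b ≠ 0 := fun hb => hab0 ⟨ha, hb⟩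
    have hd : d = 0 := by
      rcases mul_eq_zero.mp hbd2 with h | h
      · exact absurd h hb
      · exact h
    have hc : c ≠ 0 := fun hc => hcd0 ⟨hc, hd⟩
    right
    have h : (b*c) * (1 - q*r) = 0 := by linear_combination hmid + (q*d - d*r)*ha
    rcases mul_eq_zero.mp h with h' | h'
    · rcases mul_eq_zero.mp h' with h'' | h''
      · exact absurd h'' hb
      · exact absurd h'' hc
    · linear_combination -h'
  · have hc : c = 0 := by
      rcases mul_eq_zero.mp hac2 with h | h
      · exact absurd h ha
      · exact h
    have hd : d ≠ 0 := fun hd => hcd0 ⟨hc, hd⟩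
    have hb : b = 0 := by
      rcases mul_eq_zero.mp hbd2 with h | h
      · exact h
      · exact absurd h hd
    left
    have h : (a*d) * (r - q) = 0 := by linear_combination hmid + (q*b*r - b)*hc
    rcases mul_eq_zero.mp h with h' | h'
    · rcases mul_eq_zero.mp h' with h'' | h''
      · exact absurd h'' ha
      · exact absurd h'' hd
    · linear_combination h'

def qpSwap (t : ℂ) (ht : t ≠ 0) : QuantumPlane t ≃ₐ[ℂ] QuantumPlane t⁻¹ := by
  refine AlgEquiv.ofAlgHom
    (qpLift (qpY t⁻¹) (qpX t⁻¹) ?h1) (qpLift (qpY t) (qpX t) ?h2) ?_ ?_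
  case h1 => rw [qpRel t⁻¹, smul_smul, mul_inv_cancel₀ ht, one_smul]
  case h2 => rw [qpRel t, smul_smul, inv_mul_cancel₀ ht, one_smul]
  · apply qpHomExt <;> simp
  · apply qpHomExt <;> simp

end QPAux

/-- For nonzero `q q' : ℂ`, the quantum planes with parameters `q` and `q'`
are isomorphic as ℂ-algebras if and only if `q' = q` or `q' = q⁻¹`. -/
theorem quantumPlane_iso_iff (q q' : ℂ) (hq : q ≠ 0) (hq' : q' ≠ 0) :
    Nonempty (QuantumPlane q ≃ₐ[ℂ] QuantumPlane q') ↔ (q' = q ∨ q' = q⁻¹) := by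
  constructor
  · rintro ⟨φ⟩
    rcases qp_forward q q' hq φ with h | h
    · exact Or.inl h
    · exact Or.inr (eq_inv_of_mul_eq_one_left (by linear_combination h))
  · rintro (rfl | rfl)
    · exact ⟨AlgEquiv.refl⟩
    · exact ⟨qpSwap q hq⟩
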